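/- Let b ∈ ℝ, c ∈ (−1, 1), λ > 0, and Y ≥ 0, and define G : ℂ → ℂ by G(z) = b·(1 − z)/(z − c) (well defined for |z| = 1 since |c| < 1). Then the following are equivalent: (i) for all ω ∈ ℝ, (λ + Y)·|G(e^{iω})|² + 2·Y·Re(G(e^{iω})) ≤ 0; (ii) (λ + Y)·b² ≤ Y·b·(1 + c). -/

import Mathlib

open Complex

lemma keycalc (b c lam Y t s : ℝ) (hts : t^2+s^2 = 1) (hD : (t-c)^2 + s^2 ≠ 0) :
  (lam+Y) * ‖(b:ℂ)*(1 - (↑t + ↑s*Complex.I)) / ((↑t + ↑s*Complex.I) - ↑c)‖^2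
    + 2*Y*(((b:ℂ)*(1 - (↑t + ↑s*Complex.I)) / ((↑t + ↑s*Complex.I) - ↑c))).re
  = 2*(1-t)/((t-c)^2+s^2) * ((lam+Y)*b^2 - Y*b*(1+c)) := by
  have hs : s^2 = 1 - t^2 := by linarith
  set z : ℂ := (t:ℂ) + s*Complex.I with hz
  have hnv : Complex.normSq (z - c) = (t-c)^2 + s^2 := by
    simp [hz, Complex.normSq_apply]; ring
  have hnu : Complex.normSq ((b:ℂ)*(1 - z)) = b^2*((1-t)^2 + s^2) := by
    simp [hz, Complex.normSq_apply]; ring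
  have habs : ‖(b:ℂ)*(1 - z) / (z - c)‖^2
      = b^2*((1-t)^2 + s^2) / ((t-c)^2 + s^2) := by
    rw [Complex.sq_norm, Complex.normSq_div, hnu, hnv]
  have hre : (((b:ℂ)*(1 - z)) / (z - c)).re
      = (b*(1-t)*(t-c) - b*s*s) / ((t-c)^2 + s^2) := by
    rw [Complex.div_re, hnv]
    have h1 : ((b:ℂ)*(1-z)).re = b*(1-t) := by simp [hz]
    have h2 : ((b:ℂ)*(1-z)).im = -(b*s) := by simp [hz]
    have h3 : (z - (c:ℂ)).re = t - c := by simp [hz]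
    have h4 : (z - (c:ℂ)).im = s := by simp [hz]
    rw [h1, h2, h3, h4]; ring
  rw [habs, hre]
  field_simp
  linear_combination ((lam+Y)*b^2 - 2*Y*b) * hs

/-- For the scalar transfer function `G(z) = b(1 − z)/(z − c)` with `|c| < 1`, `λ > 0`
and `Y ≥ 0`, the frequency-domain inequality
`(λ + Y)|G(e^{iω})|² + 2·Y·Re G(e^{iω}) ≤ 0` for all `ω ∈ ℝ` is equivalent to
`(λ + Y)·b² ≤ Y·b·(1 + c)`. -/
theorem scalar_frequency_domain_equivalence
    (b c lam Y : ℝ) (hc : -1 < c ∧ c < 1) (hlam : 0 < lam) (hY : 0 ≤ Y)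
    (G : ℂ → ℂ) (hG : ∀ z : ℂ, G z = (b : ℂ) * (1 - z) / (z - (c : ℂ))) :
    (∀ ω : ℝ,
        (lam + Y) * ‖G (Complex.exp (Complex.I * ω))‖ ^ 2
          + 2 * Y * (G (Complex.exp (Complex.I * ω))).re ≤ 0) ↔
      (lam + Y) * b ^ 2 ≤ Y * b * (1 + c) := by
  obtain ⟨hc1, hc2⟩ := hc
  have hDpos : ∀ t s : ℝ, t^2 + s^2 = 1 → 0 < (t-c)^2 + s^2 := by
    intro t s hts
    have h1 : c*t < 1 := by nlinarith [sq_nonneg (t - c), sq_nonneg s]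
    nlinarith [mul_pos (by linarith : (0:ℝ) < 1 - c*t) (by linarith : (0:ℝ) < 1 - c*t),
      sq_nonneg (c*s)]
  have hexp : ∀ ω : ℝ, Complex.exp (Complex.I * ω)
      = (Real.cos ω : ℂ) + (Real.sin ω : ℂ) * Complex.I := by
    intro ω
    rw [mul_comm, Complex.exp_mul_I, Complex.ofReal_cos, Complex.ofReal_sin]
  have hkey : ∀ ω : ℝ,
      (lam + Y) * ‖G (Complex.exp (Complex.I * ω))‖ ^ 2
          + 2 * Y * (G (Complex.exp (Complex.I * ω))).re
        = 2*(1 - Real.cos ω)/((Real.cos ω - c)^2 + (Real.sin ω)^2)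
            * ((lam+Y)*b^2 - Y*b*(1+c)) := by
    intro ω
    have hts : (Real.cos ω)^2 + (Real.sin ω)^2 = 1 := by
      rw [← Real.sin_sq_add_cos_sq ω]; ring
    rw [hexp ω, hG]
    exact keycalc b c lam Y _ _ hts (ne_of_gt (hDpos _ _ hts))
  constructor
  · intro h
    have hπ := h Real.pi
    rw [hkey Real.pi] at hπ
    rw [Real.cos_pi, Real.sin_pi] at hπ
    have hk : 0 < 2*(1 - (-1):ℝ)/(((-1) - c)^2 + (0:ℝ)^2) := by
      apply div_pos (by norm_num)
      nlinarith
    by_contra hE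
    push_neg at hE
    nlinarith [mul_pos hk (by linarith : (0:ℝ) < (lam+Y)*b^2 - Y*b*(1+c))]
  · intro h ω
    rw [hkey ω]
    apply mul_nonpos_of_nonneg_of_nonpos
    · apply div_nonneg
      · linarith [Real.cos_le_one ω]
      · have hts : (Real.cos ω)^2 + (Real.sin ω)^2 = 1 := by
          rw [← Real.sin_sq_add_cos_sq ω]; ring
        linarith [hDpos _ _ hts]
    · linarith
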